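/- The quotient ring A = MvPolynomial (Fin 3) ℤ ⧸ Ideal.span {x*y, x*z, y*z}, where x, y, z denote the three variables, regarded as an algebra over the polynomial ring ℤ[t] via the homomorphism sending t to the image of x + y + z, is a free ℤ[t]-module with basis given by the images of 1, x, y; in particular A is a free module of rank 3 over ℤ[t]. -/

import Mathlib

noncomputable section

open MvPolynomial

/-- The ideal `(xy, xz, yz)` of `ℤ[x, y, z]`: three affine lines glued at the origin. -/
def tridentIdeal : Ideal (MvPolynomial (Fin 3) ℤ) :=
  Ideal.span {X 0 * X 1, X 0 * X 2, X 1 * X 2}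

/-- The coordinate ring `ℤ[x, y, z] ⧸ (xy, xz, yz)` of three lines glued at the origin. -/
def TridentRing : Type :=
  MvPolynomial (Fin 3) ℤ ⧸ tridentIdeal

instance : CommRing TridentRing :=
  inferInstanceAs (CommRing (MvPolynomial (Fin 3) ℤ ⧸ tridentIdeal))

/-- The quotient map `ℤ[x, y, z] → ℤ[x, y, z] ⧸ (xy, xz, yz)`. -/
def tridentMk : MvPolynomial (Fin 3) ℤ →+* TridentRing :=
  Ideal.Quotient.mk tridentIdeal

/-- The `ℤ[t]`-algebra structure on `ℤ[x, y, z] ⧸ (xy, xz, yz)` determined by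
`t ↦ x + y + z`. -/
instance : Algebra (Polynomial ℤ) TridentRing :=
  ((Polynomial.aeval (tridentMk (X 0 + X 1 + X 2)) :
    Polynomial ℤ →ₐ[ℤ] TridentRing) : Polynomial ℤ →+* TridentRing).toAlgebra

/-! Auxiliary lemmas. -/


lemma trident_smul_def (p : Polynomial ℤ) (a : TridentRing) :
    p • a = Polynomial.aeval (tridentMk (X 0 + X 1 + X 2)) p * a :=
  Algebra.smul_def p a

lemma trident_X_smul (a : TridentRing) :
    (Polynomial.X : Polynomial ℤ) • a = tridentMk (X 0 + X 1 + X 2) * a := by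
  rw [trident_smul_def, Polynomial.aeval_X]

lemma trident_mem {i j : Fin 3}
    (h : X i * X j ∈ ({X 0 * X 1, X 0 * X 2, X 1 * X 2} :
      Set (MvPolynomial (Fin 3) ℤ))) :
    X i * X j ∈ tridentIdeal :=
  Ideal.subset_span h

lemma trident_mul_eq_zero {i j : Fin 3}
    (h : X i * X j ∈ ({X 0 * X 1, X 0 * X 2, X 1 * X 2} :
      Set (MvPolynomial (Fin 3) ℤ))) :
    tridentMk (X i) * tridentMk (X j) = 0 := by
  rw [← map_mul]
  exact Ideal.Quotient.eq_zero_iff_mem.mpr (trident_mem h)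

lemma xy0 : tridentMk (X 0) * tridentMk (X 1) = 0 := trident_mul_eq_zero (by simp)
lemma xz0 : tridentMk (X 0) * tridentMk (X 2) = 0 := trident_mul_eq_zero (by simp)
lemma yz0 : tridentMk (X 1) * tridentMk (X 2) = 0 := trident_mul_eq_zero (by simp)

lemma trident_eq {f g : MvPolynomial (Fin 3) ℤ} (h : f - g ∈ tridentIdeal) :
    tridentMk f = tridentMk g :=
  Ideal.Quotient.eq.mpr h

def tridentProj (i : Fin 3) : TridentRing →+* Polynomial ℤ :=
  Ideal.Quotient.lift tridentIdeal
    ((aeval (fun j => if j = i then Polynomial.X else 0) :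
      MvPolynomial (Fin 3) ℤ →ₐ[ℤ] Polynomial ℤ) : MvPolynomial (Fin 3) ℤ →+* Polynomial ℤ)
    (by
      intro f hf
      rw [tridentIdeal] at hf
      have key : ∀ a b : Fin 3, a ≠ b →
          (aeval (fun j : Fin 3 => if j = i then Polynomial.X else 0))
            ((X a * X b : MvPolynomial (Fin 3) ℤ)) = (0 : Polynomial ℤ) := by
        intro a b hab
        rcases eq_or_ne a i with rfl | ha
        · have hb : b ≠ a := fun h => hab h.symm
          simp [hb]
        · simp [ha]
      have hle : Ideal.span ({X 0 * X 1, X 0 * X 2, X 1 * X 2} :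
            Set (MvPolynomial (Fin 3) ℤ)) ≤
          RingHom.ker ((aeval (fun j : Fin 3 => if j = i then Polynomial.X else 0) :
            MvPolynomial (Fin 3) ℤ →ₐ[ℤ] Polynomial ℤ) :
              MvPolynomial (Fin 3) ℤ →+* Polynomial ℤ) := by
        refine Ideal.span_le.mpr ?_
        rintro g (rfl | rfl | rfl)
        · exact RingHom.mem_ker.mpr (key 0 1 (by decide))
        · exact RingHom.mem_ker.mpr (key 0 2 (by decide))
        · exact RingHom.mem_ker.mpr (key 1 2 (by decide))
      exact RingHom.mem_ker.mp (hle hf))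

lemma tridentProj_mk (i : Fin 3) (f : MvPolynomial (Fin 3) ℤ) :
    tridentProj i (tridentMk f) =
      aeval (fun j : Fin 3 => if j = i then Polynomial.X else 0) f := rfl

lemma tridentProj_aeval (i : Fin 3) (p : Polynomial ℤ) :
    tridentProj i (Polynomial.aeval (tridentMk (X 0 + X 1 + X 2)) p) = p := by
  have hs : tridentProj i (tridentMk (X 0 + X 1 + X 2)) = Polynomial.X := by
    fin_cases i <;> simp [tridentProj_mk]
  rw [Polynomial.aeval_def, Polynomial.hom_eval₂, hs,
    RingHom.ext_int ((tridentProj i).comp (algebraMap ℤ TridentRing))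
      (algebraMap ℤ (Polynomial ℤ)), ← Polynomial.aeval_def, Polynomial.aeval_X_left_apply]

lemma tridentProj_smul (i : Fin 3) (p : Polynomial ℤ) (a : TridentRing) :
    tridentProj i (p • a) = p * tridentProj i a := by
  rw [trident_smul_def, map_mul, tridentProj_aeval]

lemma trident_x_sq :
    tridentMk (X 0) * tridentMk (X 0) = (Polynomial.X : Polynomial ℤ) • tridentMk (X 0) := by
  rw [trident_X_smul, ← map_mul, ← map_mul]
  refine trident_eq ?_
  have h : (X 0 * X 0 - (X 0 + X 1 + X 2) * X 0 : MvPolynomial (Fin 3) ℤ)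
      = -(X 0 * X 1) - X 0 * X 2 := by ring
  rw [h]
  exact sub_mem (neg_mem (trident_mem (by simp))) (trident_mem (by simp))

lemma trident_y_sq :
    tridentMk (X 1) * tridentMk (X 1) = (Polynomial.X : Polynomial ℤ) • tridentMk (X 1) := by
  rw [trident_X_smul, ← map_mul, ← map_mul]
  refine trident_eq ?_
  have h : (X 1 * X 1 - (X 0 + X 1 + X 2) * X 1 : MvPolynomial (Fin 3) ℤ)
      = -(X 0 * X 1) - X 1 * X 2 := by ring
  rw [h]
  exact sub_mem (neg_mem (trident_mem (by simp))) (trident_mem (by simp))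

lemma trident_z_eq : tridentMk (X 2) =
    (Polynomial.X : Polynomial ℤ) • (1 : TridentRing) - tridentMk (X 0) - tridentMk (X 1) := by
  rw [trident_X_smul, mul_one, map_add, map_add]
  ring


/-- The ring `A = ℤ[x, y, z] ⧸ (xy, xz, yz)`, viewed as an algebra over the
polynomial ring `ℤ[t]` via `t ↦ x + y + z`, is a free `ℤ[t]`-module with basis the images of
`1, x, y`; in particular `A` is free of rank `3` over `ℤ[t]`. -/
theorem stmt14 :
    ∃ b : Module.Basis (Fin 3) (Polynomial ℤ) TridentRing,
      b 0 = 1 ∧ b 1 = tridentMk (X 0) ∧ b 2 = tridentMk (X 1) := by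
  set v : Fin 3 → TridentRing := ![1, tridentMk (X 0), tridentMk (X 1)] with hv
  have hv0 : v 0 = 1 := rfl
  have hv1 : v 1 = tridentMk (X 0) := rfl
  have hv2 : v 2 = tridentMk (X 1) := rfl
  have hrange : Set.range v = {1, tridentMk (X 0), tridentMk (X 1)} := by
    ext a
    simp [hv, Matrix.range_cons, Matrix.range_empty]
    tauto
  -- linear independence
  have hli : LinearIndependent (Polynomial ℤ) v := by
    rw [Fintype.linearIndependent_iff]
    intro g hg
    rw [Fin.sum_univ_three, hv0, hv1, hv2] at hg
    have h2 : g 0 = 0 := by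
      have h := congrArg (tridentProj 2) hg
      simpa [tridentProj_smul, tridentProj_mk, map_add, smul_eq_mul] using h
    have h0 : g 1 = 0 := by
      have h := congrArg (tridentProj 0) hg
      simp [tridentProj_smul, tridentProj_mk, map_add, h2] at h
      exact h
    have h1 : g 2 = 0 := by
      have h := congrArg (tridentProj 1) hg
      simp [tridentProj_smul, tridentProj_mk, map_add, h2] at h
      exact h
    intro i; fin_cases i <;> assumption
  -- spanning
  set M : Submodule (Polynomial ℤ) TridentRing :=
    Submodule.span (Polynomial ℤ) (Set.range v) with hM
  have h1M : (1 : TridentRing) ∈ M := Submodule.subset_span (by rw [hrange]; simp)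
  have hxM : tridentMk (X 0) ∈ M := Submodule.subset_span (by rw [hrange]; simp)
  have hyM : tridentMk (X 1) ∈ M := Submodule.subset_span (by rw [hrange]; simp)
  have hzM : tridentMk (X 2) ∈ M := by
    rw [trident_z_eq]
    exact sub_mem (sub_mem (M.smul_mem _ h1M) hxM) hyM
  have hmul : ∀ i : Fin 3, ∀ a ∈ M, tridentMk (X i) * a ∈ M := by
    intro i a ha
    rw [hM, hrange] at ha
    have ha' : a ∈ Submodule.span (Polynomial ℤ)
        ({1, tridentMk (X 0), tridentMk (X 1)} : Set TridentRing) := ha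
    have : tridentMk (X i) * a ∈ Submodule.span (Polynomial ℤ)
        ({1, tridentMk (X 0), tridentMk (X 1)} : Set TridentRing) := by
      induction ha' using Submodule.span_induction with
      | mem b hb =>
          have hMr : Submodule.span (Polynomial ℤ)
              ({1, tridentMk (X 0), tridentMk (X 1)} : Set TridentRing)
                = M := by rw [hM, hrange]
          rw [hMr]
          rcases hb with rfl | rfl | rfl
          · rw [mul_one]
            fin_cases i
            · exact hxM
            · exact hyM
            · exact hzM
          · fin_cases i
            · show tridentMk (X 0) * tridentMk (X 0) ∈ M
              rw [trident_x_sq]; exact M.smul_mem _ hxM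
            · show tridentMk (X 1) * tridentMk (X 0) ∈ M
              rw [mul_comm, xy0]; exact M.zero_mem
            · show tridentMk (X 2) * tridentMk (X 0) ∈ M
              rw [mul_comm, xz0]; exact M.zero_mem
          · fin_cases i
            · show tridentMk (X 0) * tridentMk (X 1) ∈ M
              rw [xy0]; exact M.zero_mem
            · show tridentMk (X 1) * tridentMk (X 1) ∈ M
              rw [trident_y_sq]; exact M.smul_mem _ hyM
            · show tridentMk (X 2) * tridentMk (X 1) ∈ M
              rw [mul_comm, yz0]; exact M.zero_mem
      | zero => rw [mul_zero]; exact Submodule.zero_mem _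
      | add b c hbm hcm hb hc => rw [mul_add]; exact Submodule.add_mem _ (hb hbm) (hc hcm)
      | smul p b hbm hb => rw [mul_smul_comm]; exact Submodule.smul_mem _ _ (hb hbm)
    rw [hM, hrange]
    exact this
  have key : ∀ f : MvPolynomial (Fin 3) ℤ, tridentMk f ∈ M := by
    intro f
    induction f using MvPolynomial.induction_on with
    | C c =>
        have h : tridentMk (C c) = Polynomial.C c • (1 : TridentRing) := by
          rw [trident_smul_def, Polynomial.aeval_C, mul_one]
          have h2 := RingHom.congr_fun
            (RingHom.ext_int (tridentMk.comp (algebraMap ℤ (MvPolynomial (Fin 3) ℤ)))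
              (algebraMap ℤ TridentRing)) c
          simpa [MvPolynomial.algebraMap_eq] using h2
        rw [h]
        exact M.smul_mem _ h1M
    | add p q hp hq => rw [map_add]; exact M.add_mem hp hq
    | mul_X p i hp =>
        rw [map_mul, mul_comm]
        exact hmul i _ hp
  have hspan : ⊤ ≤ M := by
    intro a _
    obtain ⟨f, rfl⟩ := Ideal.Quotient.mk_surjective (I := tridentIdeal) a
    exact key f
  refine ⟨Module.Basis.mk hli hspan, ?_, ?_, ?_⟩ <;>
    simp [Module.Basis.mk_apply, hv0, hv1, hv2]

end
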